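/- Let H be a finite-index subgroup of a group G, X and Y be G-modules, f : X → Y an H-linear map, and f̃(x) = Σ_{gH ∈ G/H} g·f(g⁻¹·x) the associated G-linear map. Then for every n ≥ 0 and every cohomology class σ ∈ Hⁿ(G, X), one has Cor_H^G(f_* Res_H^G σ) = f̃_* σ in Hⁿ(G, Y). -/

import Mathlib

/-- The inhomogeneous-cochain differential in group cohomology: for an `n`-cochain
`σ : Gⁿ → X`, `(d σ)(g₀,…,gₙ) = g₀ • σ(g₁,…,gₙ) + Σⱼ (-1)^{j+1} σ(…, gⱼgⱼ₊₁, …)`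
(the last summand being `(-1)^{n+1} σ(g₀,…,g_{n-1})`). -/
def dcob {G X : Type*} [Group G] [AddCommGroup X] [DistribMulAction G X]
    (n : ℕ) (σ : (Fin n → G) → X) : (Fin (n + 1) → G) → X :=
  fun g => g 0 • σ (fun i => g i.succ) +
    ∑ j : Fin (n + 1), ((-1 : ℤ) ^ ((j : ℕ) + 1)) • σ (Fin.contractNth j (· * ·) g)

/-- The chain-level corestriction (transfer) map associated to a choice of coset
representatives `s : G/H → G`: for an `n`-cochain `τ` of `H` (recorded as a function on
tuples from `G`), `(cor τ)(g₁,…,gₙ) = Σ_{c ∈ G/H} s(c) • τ(h₁,…,hₙ)` where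
`hᵢ = s(cᵢ₋₁)⁻¹ gᵢ s(cᵢ)` and `cᵢ = (g₁⋯gᵢ)⁻¹ • c`. -/
def corMap {G : Type*} [Group G] (H : Subgroup G) [Fintype (G ⧸ H)]
    {Y : Type*} [AddCommGroup Y] [DistribMulAction G Y]
    (s : G ⧸ H → G) (n : ℕ) (τ : (Fin n → G) → Y) : (Fin n → G) → Y :=
  fun g => ∑ c : G ⧸ H,
    s c • τ (fun i =>
      (s ((((List.ofFn g).take (i : ℕ)).prod)⁻¹ • c))⁻¹ * g i *
        s ((((List.ofFn g).take ((i : ℕ) + 1)).prod)⁻¹ • c))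

/-- The averaged `G`-linear map `f̃(x) = Σ_{gH ∈ G/H} g • f(g⁻¹ • x)`. -/
def tildeMap {G : Type*} [Group G] (H : Subgroup G) [Fintype (G ⧸ H)]
    {X Y : Type*} [AddCommGroup X] [AddCommGroup Y]
    [DistribMulAction G X] [DistribMulAction G Y]
    (s : G ⧸ H → G) (f : X → Y) : X → Y :=
  fun x => ∑ c : G ⧸ H, s c • f ((s c)⁻¹ • x)


set_option linter.unusedSectionVars false

namespace Stmt13Aux

section Grp
variable {G : Type*} [Group G] {Z : Type*} [AddCommGroup Z] [DistribMulAction G Z]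

/-- delete the `k`-th entry of an ℕ-indexed tuple -/
def del (k : ℕ) (q : ℕ → G) : ℕ → G := fun j => if j < k then q j else q (j+1)

/-- partial products: `PP q j = q 0 * ⋯ * q (j-1)` -/
def PP (q : ℕ → G) : ℕ → G
  | 0 => 1
  | (j+1) => PP q j * q j

/-- successive increments -/
def incr (q : ℕ → G) : ℕ → G := fun i => (q i)⁻¹ * q (i+1)

def toHomN (σ : (ℕ → G) → Z) : (ℕ → G) → Z := fun q => q 0 • σ (incr q)

def toInhN (F : (ℕ → G) → Z) : (ℕ → G) → Z := fun g => F (PP g)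

def hdN (m : ℕ) (W : (ℕ → G) → Z) : (ℕ → G) → Z :=
  fun q => ∑ k ∈ Finset.range (m+2), (-1:ℤ)^k • W (del k q)

def ctr (j : ℕ) (g : ℕ → G) : ℕ → G :=
  fun i => if i < j then g i else if i = j then g j * g (j+1) else g (i+1)

def dcobN (m : ℕ) (σ : (ℕ → G) → Z) : (ℕ → G) → Z :=
  fun g => g 0 • σ (fun i => g (i+1)) +
    ∑ j ∈ Finset.range (m+1), (-1:ℤ)^(j+1) • σ (ctr j g)

lemma PP_succ (q : ℕ → G) (j : ℕ) : PP q (j+1) = PP q j * q j := rfl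

lemma del_lt {k j : ℕ} (h : j < k) (q : ℕ → G) : del k q j = q j := if_pos h

lemma del_ge {k j : ℕ} (h : ¬ j < k) (q : ℕ → G) : del k q j = q (j+1) := if_neg h

lemma incr_apply (q : ℕ → G) (i : ℕ) : incr q i = (q i)⁻¹ * q (i+1) := rfl

lemma incr_PP (g : ℕ → G) : incr (PP g) = g := by
  funext i
  simp [incr, PP, inv_mul_cancel_left]

lemma PP_incr (q : ℕ → G) (j : ℕ) : PP (incr q) j = (q 0)⁻¹ * q j := by
  induction j with
  | zero => simp [PP]
  | succ j ih => simp [PP, ih, incr, mul_assoc]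

/-- a G-equivariant map is determined by its inhomogeneous form -/
lemma equivariant_eq_smul_toInh (W : (ℕ → G) → Z)
    (hW : ∀ (x : G) (q : ℕ → G), W (fun j => x * q j) = x • W q) (q : ℕ → G) :
    W q = q 0 • toInhN W (incr q) := by
  have h1 : W q = q 0 • W (fun j => (q 0)⁻¹ * q j) := by
    rw [← hW (q 0) (fun j => (q 0)⁻¹ * q j)]
    simp
  have h2 : (fun j => (q 0)⁻¹ * q j) = PP (incr q) :=
    funext fun j => (PP_incr q j).symm
  rw [h1, toInhN, h2]

lemma toInhN_toHomN (σ : (ℕ → G) → Z) : toInhN (toHomN σ) = σ := by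
  funext g
  simp [toInhN, toHomN, PP, incr_PP]

lemma toHomN_equivariant (σ : (ℕ → G) → Z) (x : G) (q : ℕ → G) :
    toHomN σ (fun j => x * q j) = x • toHomN σ q := by
  have : incr (fun j => x * q j) = incr q := by
    funext i; simp [incr, mul_assoc]
  simp [toHomN, this, mul_smul]

lemma del_mul (x : G) (k : ℕ) (q : ℕ → G) :
    del k (fun j => x * q j) = fun j => x * del k q j := by
  funext j; simp only [del]; split <;> rfl

lemma hdN_equivariant (m : ℕ) (W : (ℕ → G) → Z)
    (hW : ∀ (x : G) (q : ℕ → G), W (fun j => x * q j) = x • W q) (x : G) (q : ℕ → G) :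
    hdN m W (fun j => x * q j) = x • hdN m W q := by
  simp only [hdN]
  rw [Finset.smul_sum]
  refine Finset.sum_congr rfl fun k _ => ?_
  rw [del_mul, hW]
  exact (map_zsmul (DistribMulAction.toAddMonoidHom Z x) _ _).symm

/-- dictionary between the homogeneous and inhomogeneous differentials -/
lemma dcobN_eq_toInh_hdN (m : ℕ) (σ : (ℕ → G) → Z) :
    dcobN m σ = toInhN (hdN m (toHomN σ)) := by
  funext g
  simp only [dcobN, toInhN, hdN]
  conv_rhs => rw [Finset.sum_range_succ', add_comm]
  congr 1
  · simp only [pow_zero, one_smul, toHomN]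
    have h0 : del 0 (PP g) 0 = g 0 := by
      rw [del_ge (Nat.not_lt_zero _)]; rw [PP_succ]; simp [PP]
    have h1 : incr (del 0 (PP g)) = fun i => g (i+1) := by
      funext i
      rw [incr_apply, del_ge (Nat.not_lt_zero _), del_ge (Nat.not_lt_zero _),
        PP_succ g (i+1), inv_mul_cancel_left]
    rw [h0, h1]
  · refine Finset.sum_congr rfl fun j hj => ?_
    congr 1
    simp only [toHomN]
    have h0 : del (j+1) (PP g) 0 = 1 := by
      rw [del_lt (Nat.succ_pos j)]; rfl
    have h1 : incr (del (j+1) (PP g)) = ctr j g := by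
      funext i
      rw [incr_apply]
      simp only [ctr]
      rcases lt_trichotomy i j with h | h | h
      · rw [del_lt (by omega), del_lt (by omega), if_pos h, PP_succ,
          inv_mul_cancel_left]
      · subst h
        rw [del_lt (by omega), del_ge (by omega), if_neg (lt_irrefl i), if_pos rfl,
          PP_succ g (i+1), PP_succ g i, mul_assoc, inv_mul_cancel_left]
      · rw [del_ge (by omega), del_ge (by omega), if_neg (by omega), if_neg (by omega),
          PP_succ g (i+1), inv_mul_cancel_left]
    rw [h0, h1, one_smul]

lemma hdN_toHomN_eq_zero (m : ℕ) (σ : (ℕ → G) → Z)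
    (h : ∀ g, dcobN m σ g = 0) (q : ℕ → G) : hdN m (toHomN σ) q = 0 := by
  have heq := equivariant_eq_smul_toInh (hdN m (toHomN σ))
    (hdN_equivariant m (toHomN σ) (toHomN_equivariant σ)) q
  rw [heq, ← dcobN_eq_toInh_hdN, h, smul_zero]

variable (H : Subgroup G) (s : G ⧸ H → G)

/-- `φ(x) = x · s(⟦x⁻¹⟧)`, an `H`-equivariant retraction of `G` onto `H`. -/
def phiF : G → G := fun x => x * s ((x⁻¹ : G) : G ⧸ H)

lemma phiF_mem (hs : ∀ c : G ⧸ H, (s c : G ⧸ H) = c) (x : G) : phiF H s x ∈ H := by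
  have h : ((s ((x⁻¹ : G) : G ⧸ H)) : G ⧸ H) = ((x⁻¹ : G) : G ⧸ H) := hs _
  have h2 : (s ((x⁻¹ : G) : G ⧸ H))⁻¹ * x⁻¹ ∈ H := QuotientGroup.eq.mp h
  have := H.inv_mem h2
  simpa [phiF, mul_inv_rev] using this

lemma phiF_mul (h x : G) (hh : h ∈ H) : phiF H s (h * x) = h * phiF H s x := by
  have hq : (((h * x)⁻¹ : G) : G ⧸ H) = ((x⁻¹ : G) : G ⧸ H) := by
    rw [QuotientGroup.eq]
    simpa [mul_inv_rev, mul_assoc] using hh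
  simp only [phiF, hq, mul_assoc]

/-- prism tuple: `(φq₀,…,φqᵢ,qᵢ,…)` -/
def mixN (i : ℕ) (r : ℕ → G) : ℕ → G :=
  fun j => if j ≤ i then phiF H s (r j) else r (j-1)

def PhiN (q : ℕ → G) : ℕ → G := fun j => phiF H s (q j)

lemma id1 (k i : ℕ) (hk : k < i) (q : ℕ → G) :
    del k (mixN H s i q) = mixN H s (i-1) (del k q) := by
  funext j
  simp only [del, mixN]
  split_ifs <;> first | rfl | omega | (congr 1 <;> omega) | (congr 2 <;> omega)

lemma id2 (k i : ℕ) (hk : i + 2 ≤ k) (q : ℕ → G) :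
    del k (mixN H s i q) = mixN H s i (del (k-1) q) := by
  funext j
  simp only [del, mixN]
  split_ifs <;> first | rfl | omega | (congr 1 <;> omega) | (congr 2 <;> omega)

lemma id3 (i : ℕ) (q : ℕ → G) :
    del (i+1) (mixN H s i q) = del (i+1) (mixN H s (i+1) q) := by
  funext j
  simp only [del, mixN]
  split_ifs <;> first | rfl | omega | (congr 1 <;> omega) | (congr 2 <;> omega)

lemma id_zero (q : ℕ → G) : del 0 (mixN H s 0 q) = q := by
  funext j
  simp only [del, mixN]
  split_ifs <;> first | rfl | omega | (congr 1 <;> omega) | (congr 2 <;> omega)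

lemma id_top (n : ℕ) (q : ℕ → G) (j : ℕ) (hj : j < n+2) :
    del (n+2) (mixN H s (n+1) q) j = PhiN H s q j := by
  simp only [del, mixN, PhiN]
  split_ifs <;> first | rfl | omega | (congr 1 <;> omega) | (congr 2 <;> omega)

lemma hdN' (m : ℕ) (W : (ℕ → G) → Z) :
    True := trivial

/-- the prism-operator chain homotopy: if `W` is a homogeneous cocycle of degree `n+1`
(`n+2` arguments), then `W ∘ Φ - W` is the homogeneous differential of the prism cochain. -/
lemma homotopy (n : ℕ) (W : (ℕ → G) → Z)
    (hW0 : ∀ q, ∑ k ∈ Finset.range (n+3), (-1:ℤ)^k • W (del k q) = 0)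
    (hWd : ∀ q q' : ℕ → G, (∀ j, j < n+2 → q j = q' j) → W q = W q')
    (q : ℕ → G) :
    W (PhiN H s q) - W q
      = ∑ k ∈ Finset.range (n+2), (-1:ℤ)^k •
          (∑ i ∈ Finset.range (n+1), (-1:ℤ)^(i+1) • W (mixN H s i (del k q))) := by
  classical
  set D : ℕ → Z := fun i => if i ≤ n+1 then W (del i (mixN H s i q)) else W (PhiN H s q)
    with hD
  have hone : ∀ i : ℕ, ((-1:ℤ)^i * (-1:ℤ)^i) = 1 := by
    intro i; rw [← mul_pow]; norm_num
  have hB : ∀ i ∈ Finset.range (n+2),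
      (-1:ℤ)^i • (∑ k ∈ Finset.range (n+3), (-1:ℤ)^k • W (del k (mixN H s i q)))
      = ((-1:ℤ)^i • ∑ k ∈ Finset.range i, (-1:ℤ)^k • W (mixN H s (i-1) (del k q)))
        + (D i - D (i+1))
        + ((-1:ℤ)^i • ∑ k ∈ Finset.Ico (i+2) (n+3),
            (-1:ℤ)^k • W (mixN H s i (del (k-1) q))) := by
    intro i hi
    rw [Finset.mem_range] at hi
    have hsplit : ∑ k ∈ Finset.range (n+3), (-1:ℤ)^k • W (del k (mixN H s i q))
        = (∑ k ∈ Finset.range (i+2), (-1:ℤ)^k • W (del k (mixN H s i q)))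
          + ∑ k ∈ Finset.Ico (i+2) (n+3), (-1:ℤ)^k • W (del k (mixN H s i q)) := by
      simp only [Finset.range_eq_Ico]
      exact (Finset.sum_Ico_consecutive _ (Nat.zero_le _) (by omega : i+2 ≤ n+3)).symm
    rw [hsplit, Finset.sum_range_succ, Finset.sum_range_succ]
    have ha1 : ∀ k ∈ Finset.range i,
        (-1:ℤ)^k • W (del k (mixN H s i q)) = (-1:ℤ)^k • W (mixN H s (i-1) (del k q)) := by
      intro k hk
      rw [Finset.mem_range] at hk
      rw [id1 H s k i hk]
    have ha2 : ∀ k ∈ Finset.Ico (i+2) (n+3),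
        (-1:ℤ)^k • W (del k (mixN H s i q)) = (-1:ℤ)^k • W (mixN H s i (del (k-1) q)) := by
      intro k hk
      rw [Finset.mem_Ico] at hk
      rw [id2 H s k i hk.1]
    rw [Finset.sum_congr rfl ha1, Finset.sum_congr rfl ha2]
    have hDi : W (del i (mixN H s i q)) = D i := by
      simp only [hD]
      rw [if_pos (show i ≤ n+1 by omega)]
    have hDsucc : W (del (i+1) (mixN H s i q)) = D (i+1) := by
      by_cases hle : i + 1 ≤ n + 1
      · rw [id3 H s i q]
        simp only [hD]
        rw [if_pos hle]
      · have hi' : i = n + 1 := by omega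
        subst hi'
        simp only [hD]
        rw [if_neg hle]
        exact hWd _ _ (id_top H s n q)
    rw [hDi, hDsucc]
    rw [smul_add, smul_add]
    congr 1
    rw [smul_add, smul_smul, smul_smul, hone, one_smul, pow_succ,
      ← mul_assoc, hone, one_mul, neg_one_smul]
    abel
  -- sum the identity over i
  have hL : ∑ i ∈ Finset.range (n+2),
      (-1:ℤ)^i • (∑ k ∈ Finset.range (n+3), (-1:ℤ)^k • W (del k (mixN H s i q))) = 0 := by
    refine Finset.sum_eq_zero fun i _ => ?_
    rw [hW0, smul_zero]
  rw [Finset.sum_congr rfl hB] at hL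
  rw [Finset.sum_add_distrib, Finset.sum_add_distrib] at hL
  -- telescoping middle
  have htel : ∑ i ∈ Finset.range (n+2), (D i - D (i+1)) = W q - W (PhiN H s q) := by
    have hD0 : D 0 = W q := by
      simp only [hD]
      rw [if_pos (Nat.zero_le _), id_zero]
    have hDn : D (n+2) = W (PhiN H s q) := by
      simp only [hD]
      rw [if_neg (show ¬ n+2 ≤ n+1 by omega)]
    rw [Finset.sum_range_sub' D (n+2), hD0, hDn]
  rw [htel] at hL
  -- first cross sum: reindex i ↦ i+1
  have hT1 : ∑ i ∈ Finset.range (n+2),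
      ((-1:ℤ)^i • ∑ k ∈ Finset.range i, (-1:ℤ)^k • W (mixN H s (i-1) (del k q)))
      = ∑ i ∈ Finset.range (n+1),
          ((-1:ℤ)^(i+1) • ∑ k ∈ Finset.range (i+1), (-1:ℤ)^k • W (mixN H s i (del k q))) := by
    rw [Finset.sum_range_succ']
    simp
  -- second cross sum: reindex k ↦ k+1 and drop empty top term
  have hT2 : ∑ i ∈ Finset.range (n+2),
      ((-1:ℤ)^i • ∑ k ∈ Finset.Ico (i+2) (n+3), (-1:ℤ)^k • W (mixN H s i (del (k-1) q)))
      = ∑ i ∈ Finset.range (n+1),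
          ((-1:ℤ)^(i+1) • ∑ k ∈ Finset.Ico (i+1) (n+2), (-1:ℤ)^k • W (mixN H s i (del k q))) := by
    rw [Finset.sum_range_succ]
    rw [show Finset.Ico (n+1+2) (n+3) = ∅ by rw [Finset.Ico_eq_empty_iff]; omega]
    rw [Finset.sum_empty, smul_zero, add_zero]
    refine Finset.sum_congr rfl fun i _ => ?_
    have hshift : ∑ k ∈ Finset.Ico (i+2) (n+3), (-1:ℤ)^k • W (mixN H s i (del (k-1) q))
        = ∑ k ∈ Finset.Ico (i+1) (n+2), (-1:ℤ)^(k+1) • W (mixN H s i (del k q)) := by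
      rw [Finset.sum_Ico_eq_sum_range, Finset.sum_Ico_eq_sum_range]
      have hnn : n + 3 - (i + 2) = n + 2 - (i + 1) := by omega
      rw [hnn]
      refine Finset.sum_congr rfl fun j _ => ?_
      have e1 : i + 2 + j - 1 = i + 1 + j := by omega
      have e2 : i + 2 + j = i + 1 + j + 1 := by omega
      rw [e1, e2]
    rw [hshift, Finset.smul_sum, Finset.smul_sum]
    refine Finset.sum_congr rfl fun k _ => ?_
    rw [smul_smul, smul_smul]
    congr 1
    ring
  rw [hT1, hT2] at hL
  have hcomb : ∀ i ∈ Finset.range (n+1),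
      ((-1:ℤ)^(i+1) • ∑ k ∈ Finset.range (i+1), (-1:ℤ)^k • W (mixN H s i (del k q)))
        + ((-1:ℤ)^(i+1) • ∑ k ∈ Finset.Ico (i+1) (n+2), (-1:ℤ)^k • W (mixN H s i (del k q)))
      = (-1:ℤ)^(i+1) • ∑ k ∈ Finset.range (n+2), (-1:ℤ)^k • W (mixN H s i (del k q)) := by
    intro i hi
    rw [Finset.mem_range] at hi
    rw [← smul_add]
    simp only [Finset.range_eq_Ico]
    rw [Finset.sum_Ico_consecutive _ (Nat.zero_le _) (by omega : i+1 ≤ n+2)]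
  -- swap the double sum
  have hswap : ∑ i ∈ Finset.range (n+1),
      (-1:ℤ)^(i+1) • ∑ k ∈ Finset.range (n+2), (-1:ℤ)^k • W (mixN H s i (del k q))
      = ∑ k ∈ Finset.range (n+2), (-1:ℤ)^k •
          (∑ i ∈ Finset.range (n+1), (-1:ℤ)^(i+1) • W (mixN H s i (del k q))) := by
    simp only [Finset.smul_sum]
    rw [Finset.sum_comm]
    refine Finset.sum_congr rfl fun k _ => Finset.sum_congr rfl fun i _ => ?_
    rw [smul_smul, smul_smul, mul_comm]
  -- conclude
  have hAC : (∑ i ∈ Finset.range (n+1),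
        ((-1:ℤ)^(i+1) • ∑ k ∈ Finset.range (i+1), (-1:ℤ)^k • W (mixN H s i (del k q))))
      + (∑ i ∈ Finset.range (n+1),
        ((-1:ℤ)^(i+1) • ∑ k ∈ Finset.Ico (i+1) (n+2), (-1:ℤ)^k • W (mixN H s i (del k q))))
      = ∑ k ∈ Finset.range (n+2), (-1:ℤ)^k •
          (∑ i ∈ Finset.range (n+1), (-1:ℤ)^(i+1) • W (mixN H s i (del k q))) := by
    rw [← Finset.sum_add_distrib, Finset.sum_congr rfl hcomb, hswap]
  rw [← hAC]
  have h3 : ((∑ i ∈ Finset.range (n+1),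
        ((-1:ℤ)^(i+1) • ∑ k ∈ Finset.range (i+1), (-1:ℤ)^k • W (mixN H s i (del k q))))
      + (∑ i ∈ Finset.range (n+1),
        ((-1:ℤ)^(i+1) • ∑ k ∈ Finset.Ico (i+1) (n+2), (-1:ℤ)^k • W (mixN H s i (del k q)))))
      + (W q - W (PhiN H s q)) = 0 := by
    rw [← hL]; abel
  have h4 := sub_eq_zero.mp (by rw [← h3]; abel :
    ((∑ i ∈ Finset.range (n+1),
        ((-1:ℤ)^(i+1) • ∑ k ∈ Finset.range (i+1), (-1:ℤ)^k • W (mixN H s i (del k q))))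
      + (∑ i ∈ Finset.range (n+1),
        ((-1:ℤ)^(i+1) • ∑ k ∈ Finset.Ico (i+1) (n+2), (-1:ℤ)^k • W (mixN H s i (del k q)))))
      - (W (PhiN H s q) - W q) = 0)
  exact h4.symm

section WithFintype
variable [Fintype (G ⧸ H)]

/-- chain-level corestriction on homogeneous cochains -/
def CorHomN (W : (ℕ → G) → Z) : (ℕ → G) → Z :=
  fun q => ∑ c : G ⧸ H, s c • W (fun j => (s c)⁻¹ * q j)

lemma CorHomN_hdN (m : ℕ) (W : (ℕ → G) → Z) :
    hdN m (CorHomN H s W) = CorHomN H s (hdN m W) := by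
  funext q
  simp only [hdN, CorHomN, Finset.smul_sum]
  rw [Finset.sum_comm]
  refine Finset.sum_congr rfl fun c _ => Finset.sum_congr rfl fun k _ => ?_
  rw [del_mul]
  exact (map_zsmul (DistribMulAction.toAddMonoidHom Z (s c)) _ _).symm

lemma CorHomN_equivariant (hs : ∀ c : G ⧸ H, (s c : G ⧸ H) = c)
    (W : (ℕ → G) → Z) (hW : ∀ h ∈ H, ∀ q, W (fun j => h * q j) = h • W q)
    (x : G) (q : ℕ → G) :
    CorHomN H s W (fun j => x * q j) = x • CorHomN H s W q := by
  simp only [CorHomN]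
  rw [Finset.smul_sum]
  refine (Fintype.sum_equiv (MulAction.toPerm x) _ _ fun c => ?_).symm
  show x • s c • W (fun j => (s c)⁻¹ * q j)
      = s (x • c) • W (fun j => (s (x • c))⁻¹ * (x * q j))
  have hmem : (s (x • c))⁻¹ * (x * s c) ∈ H := by
    apply QuotientGroup.eq.mp
    rw [hs (x • c)]
    conv_lhs => rw [← hs c]
    rfl
  have harg : (fun j => (s (x • c))⁻¹ * (x * q j))
      = (fun j => ((s (x • c))⁻¹ * (x * s c)) * ((s c)⁻¹ * q j)) := by
    funext j; group
  rw [harg, hW _ hmem, ← mul_smul, ← mul_smul]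
  congr 1
  group

lemma toHomN_toInhN (U : (ℕ → G) → Z)
    (hU : ∀ (x : G) (q : ℕ → G), U (fun j => x * q j) = x • U q) :
    toHomN (toInhN U) = U := by
  funext q
  exact (equivariant_eq_smul_toInh U hU q).symm

end WithFintype

end Grp
end Stmt13Aux


namespace Stmt13Aux
section Main
variable {G : Type*} [Group G] {Z : Type*} [AddCommGroup Z] [DistribMulAction G Z]

lemma dcob_eq_dcobN (m : ℕ) (σF : (Fin m → G) → Z) (σN : (ℕ → G) → Z)
    (hcompat : ∀ (a : ℕ → G) (b : Fin m → G), (∀ i : Fin m, a ↑i = b i) → σN a = σF b)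
    (g : Fin (m+1) → G) (gg : ℕ → G) (hg : ∀ i : Fin (m+1), gg ↑i = g i) :
    dcobN m σN gg = dcob m σF g := by
  simp only [dcobN, dcob]
  congr 1
  · have h0 : gg 0 = g 0 := hg 0
    rw [h0]
    congr 1
    refine hcompat _ _ fun i => ?_
    rw [← hg i.succ]
    exact congrArg gg (Fin.val_succ i).symm
  · rw [← Fin.sum_univ_eq_sum_range (fun j => (-1:ℤ)^(j+1) • σN (ctr j gg)) (m+1)]
    refine Finset.sum_congr rfl fun j _ => ?_
    congr 1
    refine hcompat _ _ fun i => ?_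
    simp only [ctr, Fin.contractNth]
    rcases lt_trichotomy (i:ℕ) (j:ℕ) with h|h|h
    · rw [if_pos h, if_pos h, ← hg i.castSucc]
      exact congrArg gg (Fin.coe_castSucc i).symm
    · rw [if_neg (by omega), if_pos h, if_neg (by omega), if_pos h,
        ← hg i.castSucc, ← hg i.succ]
      have e1 : ((i.castSucc : Fin (m+1)) : ℕ) = (i:ℕ) := Fin.coe_castSucc i
      have e2 : ((i.succ : Fin (m+1)) : ℕ) = (i:ℕ)+1 := Fin.val_succ i
      rw [e1, e2, h]
    · rw [if_neg (by omega), if_neg (by omega), if_neg (by omega), if_neg (by omega),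
        ← hg i.succ]
      exact congrArg gg (Fin.val_succ i).symm

theorem main0 {G : Type*} [Group G] (H : Subgroup G) [Fintype (G ⧸ H)]
    {X Y : Type*} [AddCommGroup X] [AddCommGroup Y]
    [DistribMulAction G X] [DistribMulAction G Y]
    (f : X → Y) (s : G ⧸ H → G)
    (σ : (Fin 0 → G) → X) (hσ : dcob 0 σ = 0) :
    corMap H s 0 (fun g => f (σ g)) = fun g => tildeMap H s f (σ g) := by
  have hsub : ∀ a b : Fin 0 → G, a = b := fun a b => funext fun i => i.elim0
  have hfix : ∀ (x : G) (e : Fin 0 → G), x • σ e = σ e := by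
    intro x e
    have hσconst : ∀ a : Fin 0 → G, σ a = σ e := fun a => congrArg σ (hsub a e)
    have h1 := congrFun hσ (fun _ : Fin 1 => x)
    have h2 : dcob 0 σ (fun _ : Fin 1 => x) = x • σ e + (-1:ℤ)^(0+1) • σ e := by
      simp only [dcob, hσconst]
      congr 1
      rw [Fin.sum_univ_one]
      norm_num
    rw [h2, Pi.zero_apply] at h1
    have h3 : ((-1:ℤ)^(0+1)) = -1 := by norm_num
    rw [h3, neg_one_zsmul] at h1
    exact add_neg_eq_zero.mp h1
  funext g
  simp only [corMap, tildeMap]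
  refine Finset.sum_congr rfl fun c _ => ?_
  have harg := hsub (fun i : Fin 0 =>
    (s ((((List.ofFn g).take (i : ℕ)).prod)⁻¹ • c))⁻¹ * g i *
      s ((((List.ofFn g).take ((i : ℕ) + 1)).prod)⁻¹ • c)) g
  rw [harg, hfix ((s c)⁻¹) g]

theorem main2 {G : Type*} [Group G] (H : Subgroup G) [Fintype (G ⧸ H)]
    {X Y : Type*} [AddCommGroup X] [AddCommGroup Y]
    [DistribMulAction G X] [DistribMulAction G Y]
    (f : X → Y) (hadd : ∀ x y : X, f (x + y) = f x + f y)
    (hH : ∀ h ∈ H, ∀ x : X, f (h • x) = h • f x)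
    (s : G ⧸ H → G) (hs : ∀ c : G ⧸ H, (s c : G ⧸ H) = c)
    (n : ℕ) (σF : (Fin (n + 1) → G) → X) (hσ : dcob (n + 1) σF = 0) :
    ∃ τ : (Fin n → G) → Y,
      (corMap H s (n + 1) (fun g => f (σF g)) - fun g => tildeMap H s f (σF g)) =
        dcob n τ := by
  classical
  set σN : (ℕ → G) → X := fun a => σF (fun i => a ↑i) with hσN_def
  set W : (ℕ → G) → Y := fun q => f (toHomN σN q) with hW_def
  set SW : (ℕ → G) → Y :=
    fun r => ∑ i ∈ Finset.range (n+1), (-1:ℤ)^(i+1) • W (mixN H s i r) with hSW_def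
  set τN : (ℕ → G) → Y := toInhN (CorHomN H s SW) with hτN_def
  refine ⟨fun b => τN (fun j => if h : j < n then b ⟨j, h⟩ else 1), ?_⟩
  have hcompatσ : ∀ (a : ℕ → G) (b : Fin (n+1) → G),
      (∀ i : Fin (n+1), a ↑i = b i) → σN a = σF b :=
    fun a b hab => congrArg σF (funext fun i => hab i)
  have hσN0 : ∀ gg : ℕ → G, dcobN (n+1) σN gg = 0 := fun gg =>
    (dcob_eq_dcobN (n+1) σF σN hcompatσ (fun i : Fin (n+2) => gg ↑i) gg
      (fun i => rfl)).trans (congrFun hσ _)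
  have hWH : ∀ h ∈ H, ∀ q, W (fun j => h * q j) = h • W q := by
    intro h hh q
    have hincr : incr (fun j => h * q j) = incr q := by
      funext i; simp [incr, mul_assoc]
    show f (toHomN σN fun j => h * q j) = h • f (toHomN σN q)
    simp only [toHomN, hincr]
    rw [mul_smul]
    exact hH h hh _
  have hWcoc : ∀ q, ∑ k ∈ Finset.range (n+3), (-1:ℤ)^k • W (del k q) = 0 := by
    intro q
    calc ∑ k ∈ Finset.range (n+3), (-1:ℤ)^k • W (del k q)
        = (AddMonoidHom.mk' f hadd)
            (∑ k ∈ Finset.range (n+3), (-1:ℤ)^k • toHomN σN (del k q)) := by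
          rw [map_sum]
          exact Finset.sum_congr rfl fun k _ =>
            (map_zsmul (AddMonoidHom.mk' f hadd) _ _).symm
      _ = (AddMonoidHom.mk' f hadd) (hdN (n+1) (toHomN σN) q) := rfl
      _ = 0 := by rw [hdN_toHomN_eq_zero (n+1) σN hσN0 q, map_zero]
  have hWd : ∀ q q' : ℕ → G, (∀ j, j < n+2 → q j = q' j) → W q = W q' := by
    intro q q' h
    show f (toHomN σN q) = f (toHomN σN q')
    congr 1
    simp only [toHomN]
    rw [h 0 (by omega)]
    congr 1
    refine hcompatσ _ _ fun i => ?_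
    have hi := i.isLt
    simp only [incr]
    rw [h ↑i (by omega), h (↑i+1) (by omega)]
  have hSWH : ∀ h ∈ H, ∀ r, SW (fun j => h * r j) = h • SW r := by
    intro h hh r
    show (∑ i ∈ Finset.range (n+1), (-1:ℤ)^(i+1) • W (mixN H s i fun j => h * r j))
        = h • ∑ i ∈ Finset.range (n+1), (-1:ℤ)^(i+1) • W (mixN H s i r)
    rw [Finset.smul_sum]
    refine Finset.sum_congr rfl fun i _ => ?_
    have hmix : mixN H s i (fun j => h * r j) = fun j => h * mixN H s i r j := by
      funext j
      simp only [mixN]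
      split_ifs
      · exact phiF_mul H s h _ hh
      · rfl
    rw [hmix, hWH h hh]
    exact (map_zsmul (DistribMulAction.toAddMonoidHom Y h) _ _).symm
  have hUequiv : ∀ (x : G) (q : ℕ → G),
      CorHomN H s SW (fun j => x * q j) = x • CorHomN H s SW q :=
    fun x q => CorHomN_equivariant H s hs SW hSWH x q
  have hPPcong : ∀ (a a' : ℕ → G), (∀ j, j < n → a j = a' j) →
      ∀ j, j ≤ n → PP a j = PP a' j := by
    intro a a' h j
    induction j with
    | zero => intro _; rfl
    | succ j ih => intro hj; rw [PP_succ, PP_succ, ih (by omega), h j (by omega)]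
  have hSWcong : ∀ r r' : ℕ → G, (∀ j, j ≤ n → r j = r' j) → SW r = SW r' := by
    intro r r' h
    show (∑ i ∈ Finset.range (n+1), (-1:ℤ)^(i+1) • W (mixN H s i r))
        = ∑ i ∈ Finset.range (n+1), (-1:ℤ)^(i+1) • W (mixN H s i r')
    refine Finset.sum_congr rfl fun i hi => ?_
    rw [Finset.mem_range] at hi
    congr 1
    refine hWd _ _ fun j hj => ?_
    simp only [mixN]
    split_ifs with h1
    · rw [h j (by omega)]
    · rw [h (j-1) (by omega)]
  have hτNcong : ∀ a a' : ℕ → G, (∀ j, j < n → a j = a' j) → τN a = τN a' := by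
    intro a a' h
    show CorHomN H s SW (PP a) = CorHomN H s SW (PP a')
    simp only [CorHomN]
    refine Finset.sum_congr rfl fun c _ => ?_
    congr 1
    refine hSWcong _ _ fun j hj => ?_
    rw [hPPcong a a' h j hj]
  funext g
  rw [Pi.sub_apply]
  set gN : ℕ → G := fun j => if h : j < n+1 then g ⟨j, h⟩ else 1 with hgN_def
  have hgN : ∀ i : Fin (n+1), gN ↑i = g i := by
    intro i
    simp only [hgN_def]
    rw [dif_pos i.isLt]
  have hlen : (List.ofFn g).length = n+1 := List.length_ofFn (f := g)
  have hPPlist : ∀ j, j ≤ n+1 → PP gN j = ((List.ofFn g).take j).prod := by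
    intro j
    induction j with
    | zero => intro _; simp [PP]
    | succ j ih =>
      intro hj
      rw [PP_succ, ih (by omega), List.prod_take_succ _ j (by rw [hlen]; omega)]
      congr 1
      rw [List.getElem_ofFn]
      simp only [hgN_def]
      rw [dif_pos (show j < n+1 by omega)]
  have key1 : ∀ c : G ⧸ H,
      s c • W (PhiN H s fun j => (s c)⁻¹ * PP gN j)
        = s c • f (σF fun i => (s ((((List.ofFn g).take (i:ℕ)).prod)⁻¹ • c))⁻¹ * g i *
            s ((((List.ofFn g).take ((i:ℕ)+1)).prod)⁻¹ • c)) := by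
    intro c
    congr 1
    have hr : ∀ j, PhiN H s (fun j' => (s c)⁻¹ * PP gN j') j
        = (s c)⁻¹ * PP gN j * s ((PP gN j)⁻¹ • c) := by
      intro j
      show phiF H s ((s c)⁻¹ * PP gN j) = _
      simp only [phiF]
      congr 2
      rw [mul_inv_rev, inv_inv]
      conv_rhs => rw [← hs c]
      rfl
    show f (toHomN σN (PhiN H s fun j => (s c)⁻¹ * PP gN j)) = _
    simp only [toHomN]
    have hr0 : PhiN H s (fun j' => (s c)⁻¹ * PP gN j') 0 = 1 := by
      rw [hr 0]
      show (s c)⁻¹ * (1:G) * s (((1:G))⁻¹ • c) = 1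
      simp
    rw [hr0, one_smul]
    refine congrArg f (hcompatσ _ _ fun i => ?_)
    have hi := i.isLt
    rw [incr_apply, hr ↑i, hr (↑i+1)]
    have hgrp : ((s c)⁻¹ * PP gN ↑i * s ((PP gN ↑i)⁻¹ • c))⁻¹ *
        ((s c)⁻¹ * PP gN (↑i+1) * s ((PP gN (↑i+1))⁻¹ • c))
        = (s ((PP gN ↑i)⁻¹ • c))⁻¹ * gN ↑i * s ((PP gN (↑i+1))⁻¹ • c) := by
      rw [PP_succ]
      group
    rw [hgrp, hgN i, hPPlist ↑i (by omega), hPPlist (↑i+1) (by omega)]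
  have key2 : ∀ c : G ⧸ H,
      s c • W (fun j => (s c)⁻¹ * PP gN j) = s c • f ((s c)⁻¹ • σF g) := by
    intro c
    congr 1
    show f (toHomN σN fun j => (s c)⁻¹ * PP gN j) = _
    simp only [toHomN]
    have hincr : incr (fun j => (s c)⁻¹ * PP gN j) = gN := by
      funext i
      simp only [incr]
      rw [PP_succ]
      group
    rw [hincr]
    have h0 : (s c)⁻¹ * PP gN 0 = (s c)⁻¹ := mul_one _
    rw [h0, hcompatσ gN g hgN]
  calc corMap H s (n+1) (fun g' => f (σF g')) g - tildeMap H s f (σF g)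
      = (∑ c : G ⧸ H, s c • W (PhiN H s fun j => (s c)⁻¹ * PP gN j))
        - ∑ c : G ⧸ H, s c • W (fun j => (s c)⁻¹ * PP gN j) := by
        congr 1
        · simp only [corMap]
          exact Finset.sum_congr rfl fun c _ => (key1 c).symm
        · simp only [tildeMap]
          exact Finset.sum_congr rfl fun c _ => (key2 c).symm
    _ = ∑ c : G ⧸ H, s c • (W (PhiN H s fun j => (s c)⁻¹ * PP gN j)
          - W (fun j => (s c)⁻¹ * PP gN j)) := by
        rw [← Finset.sum_sub_distrib]
        exact Finset.sum_congr rfl fun c _ => (smul_sub _ _ _).symm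
    _ = ∑ c : G ⧸ H, s c • hdN n SW (fun j => (s c)⁻¹ * PP gN j) := by
        refine Finset.sum_congr rfl fun c _ => ?_
        congr 1
        exact homotopy H s n W hWcoc hWd _
    _ = hdN n (CorHomN H s SW) (PP gN) := by
        rw [CorHomN_hdN]
        rfl
    _ = toInhN (hdN n (toHomN τN)) gN := by
        rw [hτN_def, toHomN_toInhN (CorHomN H s SW) hUequiv]
        rfl
    _ = dcobN n τN gN := by rw [dcobN_eq_toInh_hdN]
    _ = dcob n (fun b => τN (fun j => if h : j < n then b ⟨j, h⟩ else 1)) g := by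
        refine dcob_eq_dcobN n _ τN ?_ g gN hgN
        intro a b hab
        refine hτNcong _ _ fun j hj => ?_
        rw [dif_pos hj]
        exact hab ⟨j, hj⟩

end Main
end Stmt13Aux

/-- for `H ≤ G` of finite index, `G`-modules `X, Y`, and an `H`-linear map
`f : X → Y`, one has `Cor_H^G (f_* Res_H^G σ) = f̃_* σ` in `Hⁿ(G, Y)` for every `n ≥ 0`
and every class `σ ∈ Hⁿ(G, X)`: in degree `0` the cocycle-level maps agree on the nose,
and in positive degree `n + 1` they differ by the coboundary of an `n`-cochain. -/
theorem stmt13 (G : Type*) [Group G] (H : Subgroup G) [Fintype (G ⧸ H)]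
    (X Y : Type*) [AddCommGroup X] [AddCommGroup Y]
    [DistribMulAction G X] [DistribMulAction G Y]
    (f : X → Y) (hadd : ∀ x y : X, f (x + y) = f x + f y)
    (hH : ∀ h ∈ H, ∀ x : X, f (h • x) = h • f x)
    (s : G ⧸ H → G) (hs : ∀ c : G ⧸ H, (s c : G ⧸ H) = c) :
    (∀ σ : (Fin 0 → G) → X, dcob 0 σ = 0 →
      corMap H s 0 (fun g => f (σ g)) = fun g => tildeMap H s f (σ g)) ∧
    (∀ (n : ℕ) (σ : (Fin (n + 1) → G) → X), dcob (n + 1) σ = 0 →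
      ∃ τ : (Fin n → G) → Y,
        (corMap H s (n + 1) (fun g => f (σ g)) - fun g => tildeMap H s f (σ g)) =
          dcob n τ) := by
  constructor
  · exact fun σ hσ => Stmt13Aux.main0 H f s σ hσ
  · exact fun n σ hσ => Stmt13Aux.main2 H f hadd hH s hs n σ hσ
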